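/- Fix constants 0 < μ₁ < μ₂. Define on Ω_c the exact phase K₁(t,r) = ∫_{r₁}^r √(2(λ_c(t,r)−q(s))) ds − t·λ_c(t,r), the Dollard phase K_do(t,r) = (r−r₁)²/(2t) − t·λ₀ − (t/(r−r₁))·∫_{r₁}^r (q(s)−λ₀) ds, and the phase shift θ(λ) = ∫_{r₁}^∞ (√(2(λ−q(s))) − b_do(λ,s)) ds for λ ≥ λ₁ (this integral converges absolutely). Then there exist C′ > 0, ε′ > 0 and T₀ > 0 such that for every t ≥ T₀ and every r with (t,r) ∈ Ω_c and μ₁ ≤ (r−r₁)/t ≤ μ₂ one has |K₁(t,r) − K_do(t,r) − θ(λ_c(t,r))| ≤ C′·t^{−ε′}. (This is the phase comparison establishing (4.14) in the proof of the paper's Theorem 2.11 on Dollard-modified wave operators.) -/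

import Mathlib

open MeasureTheory

lemma alg1 (a b u : ℝ) (ha : 0 < a) (hb : 0 < b) (h : a^2 = b^2 - 2*u) :
    a - (b - u/b) = -(2*u^2)/(b*(a+b)^2) := by
  have hab : 0 < a + b := by linarith
  field_simp
  linear_combination (((a+b)^2 + 2*u + b^2 - a^2)/2) * h

lemma alg2 (a b u : ℝ) (ha : 0 < a) (hb : 0 < b) (h : a^2 = b^2 - 2*u) :
    1/a - 1/b = 2*u/(a*b*(a+b)) := by
  have hab : 0 < a + b := by linarith
  field_simp
  linear_combination (-1) * h

lemma cancel_aux (A e c t : ℝ) (ht : t ≠ 0) (hc : c ≠ 0) :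
    A * (e * t) / (c * t) = A / c * e := by
  field_simp

lemma sq_rpow' (x p : ℝ) (hx : 0 ≤ x) : (x ^ p)^2 = x^(2*p) := by
  rw [mul_comm, Real.rpow_mul hx, ← Real.rpow_natCast (x^p) 2]
  norm_num

lemma phase_algebra (ρ b0 G Q Φ Fi t lam lam0 θv Ia : ℝ)
    (hρ : ρ ≠ 0) (hb0 : b0 ≠ 0) (htv : t * b0 = ρ + G * b0) (ht0 : t ≠ 0)
    (hlamv : lam = lam0 + b0^2/2)
    (hIa : Ia = ρ*b0 - Q/b0 + Φ) (hθv : θv = Φ + Fi) :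
    (Ia - t*lam) - (ρ^2/(2*t) - t*lam0 - (t/ρ)*Q) - θv
      = -(G^2*b0^2)/(2*t) + Q*G/ρ - Fi := by
  subst hIa hθv hlamv
  have hG : G = t - ρ/b0 := by
    field_simp
    linarith [htv]
  subst hG
  field_simp
  ring

lemma fpoint (lam0 lam1 C ε : ℝ) (hlam : lam0 < lam1) (hC : 0 < C) (hε : 0 < ε)
    (lam qs s : ℝ) (hl : lam1 ≤ lam) (hs : 1 ≤ s)
    (hqu : qs ≤ (lam0 + lam1) / 2) (hqd : |qs - lam0| ≤ C * s ^ (-(1 + ε) / 2)) :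
    |Real.sqrt (2*(lam - qs)) - (Real.sqrt (2*(lam - lam0))
        - (qs - lam0)/Real.sqrt (2*(lam - lam0)))|
      ≤ C^2 / (2*((lam1 - lam0)*Real.sqrt (lam1 - lam0))) * s ^ (-(1 + ε)) := by
  have hd : 0 < lam1 - lam0 := sub_pos.mpr hlam
  set d := lam1 - lam0 with hdd
  set sd := Real.sqrt d with hsdd
  have hsd : 0 < sd := Real.sqrt_pos.mpr hd
  have hsd2 : sd^2 = d := Real.sq_sqrt hd.le
  have h1 : d ≤ 2*(lam - qs) := by rw [hdd]; linarith
  have h2 : d ≤ 2*(lam - lam0) := by rw [hdd]; linarith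
  set a := Real.sqrt (2*(lam - qs)) with haa
  set b := Real.sqrt (2*(lam - lam0)) with hbb
  have had : sd ≤ a := Real.sqrt_le_sqrt h1
  have hbd : sd ≤ b := Real.sqrt_le_sqrt h2
  have ha : 0 < a := lt_of_lt_of_le hsd had
  have hb : 0 < b := lt_of_lt_of_le hsd hbd
  have ha2 : a^2 = 2*(lam - qs) := Real.sq_sqrt (by linarith)
  have hb2 : b^2 = 2*(lam - lam0) := Real.sq_sqrt (by linarith)
  set u := qs - lam0 with huu
  have key : a - (b - u/b) = -(2*u^2)/(b*(a+b)^2) :=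
    alg1 a b u ha hb (by rw [ha2, hb2, huu]; ring)
  have hspos : (0:ℝ) < s := by linarith
  have hu2 : u^2 ≤ C^2 * s ^ (-(1 + ε)) := by
    have h3 : |u|^2 ≤ (C * s ^ (-(1 + ε) / 2))^2 := pow_le_pow_left₀ (abs_nonneg u) hqd 2
    rw [sq_abs] at h3
    have h5 : (C * s ^ (-(1 + ε) / 2))^2 = C^2 * s ^ (-(1 + ε)) := by
      rw [mul_pow, sq_rpow' s _ hspos.le]
      have : (2:ℝ) * (-(1 + ε)/2) = -(1 + ε) := by ring
      rw [this]
    rw [h5] at h3; exact h3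
  have hab2 : (2*sd)^2 ≤ (a+b)^2 := pow_le_pow_left₀ (by positivity) (by linarith) 2
  have hdenom : 4*(d*sd) ≤ b*(a+b)^2 := by
    have h6 : sd*(2*sd)^2 ≤ b*(a+b)^2 :=
      mul_le_mul hbd hab2 (by positivity) hb.le
    have h7 : sd*(2*sd)^2 = 4*(d*sd) := by rw [mul_pow, ← hsd2]; ring
    linarith
  rw [key, abs_div, abs_neg]
  rw [abs_of_nonneg (by positivity : (0:ℝ) ≤ 2*u^2),
      abs_of_nonneg (by positivity : (0:ℝ) ≤ b*(a+b)^2)]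
  have h8 : 4*(d*sd) = 2*(2*(d*sd)) := by ring
  calc 2*u^2 / (b*(a+b)^2) ≤ 2*(C^2 * s ^ (-(1 + ε))) / (4*(d*sd)) :=
        div_le_div₀ (by positivity) (by linarith) (by positivity) hdenom
    _ = (C^2 * s ^ (-(1 + ε))) / (2*(d*sd)) := by
        rw [h8]; exact mul_div_mul_left _ _ two_ne_zero
    _ = C^2 / (2*(d*sd)) * s ^ (-(1 + ε)) := by
        rw [div_mul_eq_mul_div]

lemma gpoint (lam0 lam1 C ε : ℝ) (hlam : lam0 < lam1) (hC : 0 < C) (hε : 0 < ε)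
    (lam qs s : ℝ) (hl : lam1 ≤ lam) (hs : 1 ≤ s)
    (hqu : qs ≤ (lam0 + lam1) / 2) (hqd : |qs - lam0| ≤ C * s ^ (-(1 + ε) / 2)) :
    |1/Real.sqrt (2*(lam - qs)) - 1/Real.sqrt (2*(lam - lam0))|
      ≤ C / ((lam1 - lam0)*Real.sqrt (lam1 - lam0)) * s ^ (-(1 + ε) / 2) := by
  have hd : 0 < lam1 - lam0 := sub_pos.mpr hlam
  set d := lam1 - lam0 with hdd
  set sd := Real.sqrt d with hsdd
  have hsd : 0 < sd := Real.sqrt_pos.mpr hd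
  have hsd2 : sd^2 = d := Real.sq_sqrt hd.le
  have h1 : d ≤ 2*(lam - qs) := by rw [hdd]; linarith
  have h2 : d ≤ 2*(lam - lam0) := by rw [hdd]; linarith
  set a := Real.sqrt (2*(lam - qs)) with haa
  set b := Real.sqrt (2*(lam - lam0)) with hbb
  have had : sd ≤ a := Real.sqrt_le_sqrt h1
  have hbd : sd ≤ b := Real.sqrt_le_sqrt h2
  have ha : 0 < a := lt_of_lt_of_le hsd had
  have hb : 0 < b := lt_of_lt_of_le hsd hbd
  have ha2 : a^2 = 2*(lam - qs) := Real.sq_sqrt (by linarith)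
  have hb2 : b^2 = 2*(lam - lam0) := Real.sq_sqrt (by linarith)
  set u := qs - lam0 with huu
  have key : 1/a - 1/b = 2*u/(a*b*(a+b)) :=
    alg2 a b u ha hb (by rw [ha2, hb2, huu]; ring)
  have hdenom : 2*(d*sd) ≤ a*b*(a+b) := by
    have h6 : (sd*sd)*(2*sd) ≤ (a*b)*(a+b) :=
      mul_le_mul (mul_le_mul had hbd hsd.le ha.le) (by linarith) (by positivity)
        (by positivity)
    have h7 : (sd*sd)*(2*sd) = 2*(d*sd) := by
      have : sd*sd = d := by rw [← hsd2]; ring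
      rw [this]; ring
    linarith
  rw [key, abs_div]
  rw [abs_of_nonneg (by positivity : (0:ℝ) ≤ a*b*(a+b))]
  have habs : |2*u| ≤ 2*(C * s ^ (-(1 + ε) / 2)) := by
    rw [abs_mul, abs_two]; rw [huu] at hqd ⊢; linarith [hqd]
  calc |2*u| / (a*b*(a+b)) ≤ 2*(C * s ^ (-(1 + ε) / 2)) / (2*(d*sd)) :=
        div_le_div₀ (by positivity) habs (by positivity) hdenom
    _ = (C * s ^ (-(1 + ε) / 2)) / (d*sd) :=
        mul_div_mul_left _ _ two_ne_zero
    _ = C / (d*sd) * s ^ (-(1 + ε) / 2) := by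
        rw [div_mul_eq_mul_div]

set_option maxHeartbeats 2000000 in
/-- Phase comparison establishing (4.14) in the proof of the
paper's Theorem 2.11: with the exact phase `K₁`, the Dollard phase `K_do` and the
phase shift `θ(λ) = ∫_{r₁}^∞ (√(2(λ−q)) − b_do(λ,·)) ds` (an absolutely convergent
integral), there are `C′, ε′ > 0` and `T₀ > 0` such that
`|K₁(t,r) − K_do(t,r) − θ(λ_c(t,r))| ≤ C′·t^{−ε′}` for all `t ≥ T₀` and `r` with
`(t,r) ∈ Ω_c` and `μ₁ ≤ (r−r₁)/t ≤ μ₂`. -/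
theorem dollard_phase_comparison
    (lam0 lam1 r1 c1 c2 m C ε : ℝ)
    (hlam : lam0 < lam1) (hr1 : 1 ≤ r1) (hc1 : 0 < c1) (hc12 : c1 ≤ c2)
    (hm : m ≤ (lam0 + lam1) / 2)
    (hC : 0 < C) (hε : 0 < ε) (hε1 : ε < 1)
    (w q : ℝ → ℝ)
    (hw : ContinuousOn w (Set.Ici r1))
    (hwl : ∀ s, r1 ≤ s → c1 ≤ w s) (hwu : ∀ s, r1 ≤ s → w s ≤ c2)
    (hw1 : ∀ s, r1 ≤ s → w s = 1)
    (hq : ContinuousOn q (Set.Ici r1))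
    (hql : ∀ s, r1 ≤ s → m ≤ q s) (hqu : ∀ s, r1 ≤ s → q s ≤ (lam0 + lam1) / 2)
    (hqd : ∀ s, r1 ≤ s → |q s - lam0| ≤ C * s ^ (-(1 + ε) / 2))
    (T : ℝ → ℝ → ℝ)
    (hT : ∀ lam r, T lam r = ∫ s in r1..r, w s / Real.sqrt (2 * (lam - q s)))
    (Ωc : Set (ℝ × ℝ))
    (hΩc : Ωc = {p : ℝ × ℝ | 0 < p.1 ∧ r1 < p.2 ∧ p.1 < T lam1 p.2})
    (lamc : ℝ → ℝ → ℝ)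
    (hlamc : ∀ p ∈ Ωc, lam1 < lamc p.1 p.2 ∧ T (lamc p.1 p.2) p.2 = p.1)
    (μ1 μ2 : ℝ) (hμ1 : 0 < μ1) (hμ12 : μ1 < μ2) :
    (∀ lam : ℝ, lam1 ≤ lam →
      IntegrableOn (fun s =>
        Real.sqrt (2 * (lam - q s))
          - (Real.sqrt (2 * (lam - lam0))
              - (q s - lam0) / Real.sqrt (2 * (lam - lam0))))
        (Set.Ioi r1)) ∧
    ∀ K1 Kdo : ℝ → ℝ → ℝ, ∀ θ : ℝ → ℝ,
      (∀ t r, K1 t r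
        = (∫ s in r1..r, Real.sqrt (2 * (lamc t r - q s))) - t * lamc t r) →
      (∀ t r, Kdo t r
        = (r - r1) ^ 2 / (2 * t) - t * lam0
          - (t / (r - r1)) * ∫ s in r1..r, (q s - lam0)) →
      (∀ lam, θ lam
        = ∫ s in Set.Ioi r1,
            (Real.sqrt (2 * (lam - q s))
              - (Real.sqrt (2 * (lam - lam0))
                  - (q s - lam0) / Real.sqrt (2 * (lam - lam0))))) →
      ∃ C' > 0, ∃ ε' : ℝ, 0 < ε' ∧ ∃ T0 > 0, ∀ t : ℝ, T0 ≤ t → ∀ r : ℝ, (t, r) ∈ Ωc →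
        μ1 ≤ (r - r1) / t → (r - r1) / t ≤ μ2 →
        |K1 t r - Kdo t r - θ (lamc t r)| ≤ C' * t ^ (-ε') := by
  have hd : 0 < lam1 - lam0 := sub_pos.mpr hlam
  have hr1p : (0:ℝ) < r1 := lt_of_lt_of_le one_pos hr1
  have hsd : 0 < Real.sqrt (lam1 - lam0) := Real.sqrt_pos.mpr hd
  set Kf := C^2 / (2*((lam1 - lam0)*Real.sqrt (lam1 - lam0))) with hKf
  set Kg := C / ((lam1 - lam0)*Real.sqrt (lam1 - lam0)) with hKg
  have hKfp : 0 < Kf := by rw [hKf]; positivity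
  have hKgp : 0 < Kg := by rw [hKg]; positivity
  -- pointwise bounds
  have hfp : ∀ lam, lam1 ≤ lam → ∀ s, r1 ≤ s →
      |Real.sqrt (2*(lam - q s)) - (Real.sqrt (2*(lam - lam0))
        - (q s - lam0)/Real.sqrt (2*(lam - lam0)))| ≤ Kf * s ^ (-(1+ε)) :=
    fun lam hl s hs => fpoint lam0 lam1 C ε hlam hC hε lam (q s) s hl
      (le_trans hr1 hs) (hqu s hs) (hqd s hs)
  have hgp : ∀ lam, lam1 ≤ lam → ∀ s, r1 ≤ s →
      |1/Real.sqrt (2*(lam - q s)) - 1/Real.sqrt (2*(lam - lam0))|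
        ≤ Kg * s ^ (-(1+ε)/2) :=
    fun lam hl s hs => gpoint lam0 lam1 C ε hlam hC hε lam (q s) s hl
      (le_trans hr1 hs) (hqu s hs) (hqd s hs)
  -- continuity
  have hcont_a : ∀ lam : ℝ,
      ContinuousOn (fun s => Real.sqrt (2*(lam - q s))) (Set.Ici r1) := fun lam =>
    Real.continuous_sqrt.comp_continuousOn (continuousOn_const.mul (continuousOn_const.sub hq))
  have hapos : ∀ lam, lam1 ≤ lam → ∀ s ∈ Set.Ici r1,
      0 < Real.sqrt (2*(lam - q s)) := by
    intro lam hl s hs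
    apply Real.sqrt_pos.mpr
    have := hqu s hs; linarith
  -- integrability of f on Ioi r1
  have hfint : ∀ lam, lam1 ≤ lam → IntegrableOn (fun s =>
      Real.sqrt (2*(lam - q s)) - (Real.sqrt (2*(lam - lam0))
        - (q s - lam0)/Real.sqrt (2*(lam - lam0)))) (Set.Ioi r1) := by
    intro lam hl
    have hfc : ContinuousOn (fun s =>
        Real.sqrt (2*(lam - q s)) - (Real.sqrt (2*(lam - lam0))
          - (q s - lam0)/Real.sqrt (2*(lam - lam0)))) (Set.Ici r1) :=
      (hcont_a lam).sub (continuousOn_const.sub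
        ((hq.sub continuousOn_const).div_const _))
    have hdom : IntegrableOn (fun s : ℝ => Kf * s ^ (-(1+ε))) (Set.Ioi r1) :=
      (integrableOn_Ioi_rpow_of_lt (by linarith) hr1p).const_mul Kf
    refine hdom.mono'
      ((hfc.mono Set.Ioi_subset_Ici_self).aestronglyMeasurable measurableSet_Ioi) ?_
    filter_upwards [ae_restrict_mem measurableSet_Ioi] with s hs
    rw [Real.norm_eq_abs]
    exact hfp lam hl s (le_of_lt hs)
  refine ⟨fun lam hl => hfint lam hl, ?_⟩
  intro K1 Kdo θ hK1 hKdo hθ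
  have hμ2 : 0 < μ2 := lt_trans hμ1 hμ12
  have h1ε : (0:ℝ) < 1 - ε := by linarith
  set bmax := Real.sqrt (2*((μ2^2 + lam0 + lam1)/2 - lam0)) with hbmaxd
  have hbmaxp : 0 < bmax := by
    rw [hbmaxd]; apply Real.sqrt_pos.mpr; nlinarith [sq_nonneg μ2]
  set Mg := Kg * (2/(1-ε)) with hMgd
  set Mq := C * (2/(1-ε)) with hMqd
  have hMgp : 0 < Mg := by rw [hMgd]; exact mul_pos hKgp (by positivity)
  have hMqp : 0 < Mq := by rw [hMqd]; exact mul_pos hC (by positivity)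
  set R := r1 + μ2 with hRd
  have hRp : 0 < R := by rw [hRd]; exact add_pos hr1p hμ2
  have hRe : 0 < R^(1-ε) := Real.rpow_pos_of_pos hRp _
  have hμ1e : 0 < μ1^(-ε) := Real.rpow_pos_of_pos hμ1 _
  set c1' := bmax^2 * Mg^2 * R^(1-ε) / 2 with hc1d
  set c2' := Mq * Mg * R^(1-ε) / μ1 with hc2d
  set c3' := Kf * μ1^(-ε) / ε with hc3d
  have hc1p : 0 < c1' := by
    rw [hc1d]
    exact div_pos (mul_pos (mul_pos (pow_pos hbmaxp 2) (pow_pos hMgp 2)) hRe) two_pos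
  have hc2p : 0 < c2' := by
    rw [hc2d]
    exact div_pos (mul_pos (mul_pos hMqp hMgp) hRe) hμ1
  have hc3p : 0 < c3' := by
    rw [hc3d]
    exact div_pos (mul_pos hKfp hμ1e) hε
  refine ⟨c1' + c2' + c3', add_pos (add_pos hc1p hc2p) hc3p, ε, hε, 1, one_pos, ?_⟩
  intro t ht1 r hmem hμl hμr
  have ht0 : 0 < t := by rw [hΩc] at hmem; exact hmem.1
  have hrr1 : r1 < r := by rw [hΩc] at hmem; exact hmem.2.1
  have hrp : 0 < r := lt_trans hr1p hrr1
  obtain ⟨hLgt0, hTt0⟩ := hlamc (t, r) hmem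
  set L := lamc t r with hLdef
  have hLgt : lam1 < L := hLgt0
  have hTt : T L r = t := hTt0
  have hlL : lam1 ≤ L := le_of_lt hLgt
  have hLl0 : lam0 < L := lt_trans hlam hLgt
  have hb0p : 0 < Real.sqrt (2*(L - lam0)) := Real.sqrt_pos.mpr (by linarith)
  have hb02 : (Real.sqrt (2*(L - lam0)))^2 = 2*(L - lam0) :=
    Real.sq_sqrt (by linarith)
  have hρp : 0 < r - r1 := sub_pos.mpr hrr1
  have hρl : μ1 * t ≤ r - r1 := (le_div_iff₀ ht0).mp hμl
  have hρu : r - r1 ≤ μ2 * t := (div_le_iff₀ ht0).mp hμr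
  -- t as an integral
  have ht' : t = ∫ s in r1..r, 1 / Real.sqrt (2*(L - q s)) := by
    conv_lhs => rw [← hTt]
    rw [hT]
    apply intervalIntegral.integral_congr
    intro s hs
    rw [Set.uIcc_of_le hrr1.le] at hs
    simp only
    rw [hw1 s hs.1]
  -- interval integrability toolkit
  have huIcc : Set.uIcc r1 r = Set.Icc r1 r := Set.uIcc_of_le hrr1.le
  have hsubI : Set.Icc r1 r ⊆ Set.Ici r1 := Set.Icc_subset_Ici_self
  have haC : ContinuousOn (fun s => Real.sqrt (2*(L - q s))) (Set.Icc r1 r) :=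
    (hcont_a L).mono hsubI
  have hane : ∀ s ∈ Set.Icc r1 r, Real.sqrt (2*(L - q s)) ≠ 0 :=
    fun s hs => (hapos L hlL s (hsubI hs)).ne'
  have hiaI : IntervalIntegrable (fun s => Real.sqrt (2*(L - q s))) volume r1 r :=
    ContinuousOn.intervalIntegrable (by rw [huIcc]; exact haC)
  have hinvC : ContinuousOn (fun s => 1 / Real.sqrt (2*(L - q s))) (Set.Icc r1 r) :=
    continuousOn_const.div haC hane
  have hiinv : IntervalIntegrable (fun s => 1 / Real.sqrt (2*(L - q s))) volume r1 r :=
    ContinuousOn.intervalIntegrable (by rw [huIcc]; exact hinvC)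
  have hqC : ContinuousOn q (Set.Icc r1 r) := hq.mono hsubI
  have hiqm : IntervalIntegrable (fun s => q s - lam0) volume r1 r :=
    ContinuousOn.intervalIntegrable (by rw [huIcc]; exact hqC.sub continuousOn_const)
  have hiub : IntervalIntegrable
      (fun s => Real.sqrt (2*(L - lam0)) - (q s - lam0)/Real.sqrt (2*(L - lam0)))
      volume r1 r :=
    ContinuousOn.intervalIntegrable (by rw [huIcc]; exact continuousOn_const.sub ((hqC.sub continuousOn_const).div_const _))
  have higG : IntervalIntegrable
      (fun s => 1/Real.sqrt (2*(L - q s)) - 1/Real.sqrt (2*(L - lam0))) volume r1 r :=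
    ContinuousOn.intervalIntegrable (by rw [huIcc]; exact hinvC.sub continuousOn_const)
  have hrpowC : ∀ p : ℝ, ContinuousOn (fun s : ℝ => s ^ p) (Set.Icc r1 r) := by
    intro p
    exact ContinuousOn.rpow_const continuousOn_id
      (fun x hx => Or.inl (ne_of_gt (lt_of_lt_of_le hr1p hx.1)))
  have hirpow : ∀ c p : ℝ, IntervalIntegrable (fun s : ℝ => c * s ^ p) volume r1 r :=
    fun c p => ContinuousOn.intervalIntegrable (by rw [huIcc]; exact continuousOn_const.mul (hrpowC p))
  -- the decomposition of ∫ a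
  have hIaEq : (∫ s in r1..r, Real.sqrt (2*(L - q s)))
      = (r - r1) * Real.sqrt (2*(L - lam0))
        - (∫ s in r1..r, (q s - lam0)) / Real.sqrt (2*(L - lam0))
        + ∫ s in r1..r, (Real.sqrt (2*(L - q s)) - (Real.sqrt (2*(L - lam0))
            - (q s - lam0)/Real.sqrt (2*(L - lam0)))) := by
    rw [intervalIntegral.integral_sub hiaI hiub]
    have h2 : (∫ s in r1..r, (Real.sqrt (2*(L - lam0))
        - (q s - lam0)/Real.sqrt (2*(L - lam0))))
        = (r - r1) * Real.sqrt (2*(L - lam0))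
          - (∫ s in r1..r, (q s - lam0)) / Real.sqrt (2*(L - lam0)) := by
      rw [intervalIntegral.integral_sub intervalIntegrable_const
        (hiqm.div_const _), intervalIntegral.integral_div,
        intervalIntegral.integral_const, smul_eq_mul]
    rw [h2]; ring
  -- G value
  have hGEq : (∫ s in r1..r, (1/Real.sqrt (2*(L - q s)) - 1/Real.sqrt (2*(L - lam0))))
      = t - (r - r1) / Real.sqrt (2*(L - lam0)) := by
    rw [intervalIntegral.integral_sub hiinv intervalIntegrable_const,
      intervalIntegral.integral_const, smul_eq_mul, ← ht', mul_one_div]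
  have htb : t * Real.sqrt (2*(L - lam0)) = (r - r1)
      + (∫ s in r1..r, (1/Real.sqrt (2*(L - q s)) - 1/Real.sqrt (2*(L - lam0))))
        * Real.sqrt (2*(L - lam0)) := by
    rw [hGEq, sub_mul, div_mul_cancel₀ _ hb0p.ne']; ring
  -- θ split
  have hθsplit : θ L = (∫ s in r1..r, (Real.sqrt (2*(L - q s))
        - (Real.sqrt (2*(L - lam0)) - (q s - lam0)/Real.sqrt (2*(L - lam0)))))
      + ∫ s in Set.Ioi r, (Real.sqrt (2*(L - q s))
        - (Real.sqrt (2*(L - lam0)) - (q s - lam0)/Real.sqrt (2*(L - lam0)))) := by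
    rw [hθ L, ← Set.Ioc_union_Ioi_eq_Ioi hrr1.le,
      MeasureTheory.setIntegral_union (Set.Ioc_disjoint_Ioi le_rfl)
        measurableSet_Ioi ((hfint L hlL).mono_set Set.Ioc_subset_Ioi_self)
        ((hfint L hlL).mono_set (Set.Ioi_subset_Ioi hrr1.le)),
      intervalIntegral.integral_of_le hrr1.le]
  have hlamval : L = lam0 + (Real.sqrt (2*(L - lam0)))^2/2 := by
    rw [hb02]; ring
  -- the key identity
  have hE : K1 t r - Kdo t r - θ L
      = -((∫ s in r1..r, (1/Real.sqrt (2*(L - q s)) - 1/Real.sqrt (2*(L - lam0))))^2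
            * (Real.sqrt (2*(L - lam0)))^2)/(2*t)
        + (∫ s in r1..r, (q s - lam0))
            * (∫ s in r1..r, (1/Real.sqrt (2*(L - q s)) - 1/Real.sqrt (2*(L - lam0))))
            / (r - r1)
        - ∫ s in Set.Ioi r, (Real.sqrt (2*(L - q s))
            - (Real.sqrt (2*(L - lam0)) - (q s - lam0)/Real.sqrt (2*(L - lam0)))) := by
    rw [hK1 t r, hKdo t r]
    exact phase_algebra (r - r1) (Real.sqrt (2*(L - lam0))) _ _ _ _ t L lam0 (θ L) _
      hρp.ne' hb0p.ne' htb ht0.ne' hlamval hIaEq hθsplit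
  -- upper bound on L
  have hv0 : 0 < 2*L - lam0 - lam1 := by linarith
  have hsvp : 0 < Real.sqrt (2*L - lam0 - lam1) := Real.sqrt_pos.mpr hv0
  have hvle : Real.sqrt (2*L - lam0 - lam1) ≤ μ2 := by
    have hmono : ∀ s ∈ Set.Icc r1 r,
        1/Real.sqrt (2*(L - q s)) ≤ 1/Real.sqrt (2*L - lam0 - lam1) := by
      intro s hs
      have hq' := hqu s (hsubI hs)
      have h5 : Real.sqrt (2*L - lam0 - lam1) ≤ Real.sqrt (2*(L - q s)) :=
        Real.sqrt_le_sqrt (by linarith)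
      exact one_div_le_one_div_of_le hsvp h5
    have h1 : t ≤ ∫ _s in r1..r, 1/Real.sqrt (2*L - lam0 - lam1) := by
      rw [ht']
      exact intervalIntegral.integral_mono_on hrr1.le hiinv
        intervalIntegrable_const hmono
    rw [intervalIntegral.integral_const, smul_eq_mul, mul_one_div] at h1
    have h2 : t * Real.sqrt (2*L - lam0 - lam1) ≤ r - r1 := (le_div_iff₀ hsvp).mp h1
    have h3 : t * Real.sqrt (2*L - lam0 - lam1) ≤ t * μ2 := by linarith
    exact (mul_le_mul_iff_right₀ ht0).mp h3
  have hLub : L ≤ (μ2^2 + lam0 + lam1)/2 := by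
    have h4 : (Real.sqrt (2*L - lam0 - lam1))^2 ≤ μ2^2 :=
      pow_le_pow_left₀ (Real.sqrt_nonneg _) hvle 2
    rw [Real.sq_sqrt hv0.le] at h4
    linarith
  have hb0max : Real.sqrt (2*(L - lam0)) ≤ bmax := by
    rw [hbmaxd]
    exact Real.sqrt_le_sqrt (by linarith)
  -- bound on G
  have hexp1 : -(1+ε)/2 + 1 = (1-ε)/2 := by ring
  have hrpnn : (0:ℝ) ≤ r ^ ((1-ε)/2) := (Real.rpow_pos_of_pos hrp _).le
  have hintGb : ∀ (c : ℝ) (hcp : 0 < c)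
      (F : ℝ → ℝ) (hFi : IntervalIntegrable F volume r1 r)
      (hFb : ∀ s ∈ Set.Icc r1 r, |F s| ≤ c * s ^ (-(1+ε)/2)),
      |∫ s in r1..r, F s| ≤ (c * (2/(1-ε))) * r ^ ((1-ε)/2) := by
    intro c hcp F hFi hFb
    have h1 : |∫ s in r1..r, F s| ≤ ∫ s in r1..r, |F s| :=
      intervalIntegral.abs_integral_le_integral_abs hrr1.le
    have h2 : (∫ s in r1..r, |F s|) ≤ ∫ s in r1..r, c * s ^ (-(1+ε)/2) :=
      intervalIntegral.integral_mono_on hrr1.le hFi.abs (hirpow c _) hFb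
    have h3 : (∫ s in r1..r, c * s ^ (-(1+ε)/2))
        = c * ((r ^ ((1-ε)/2) - r1 ^ ((1-ε)/2))/((1-ε)/2)) := by
      rw [intervalIntegral.integral_const_mul,
        integral_rpow (Or.inl (by linarith : (-1:ℝ) < -(1+ε)/2)), hexp1]
    have h4 : c * ((r ^ ((1-ε)/2) - r1 ^ ((1-ε)/2))/((1-ε)/2))
        ≤ (c * (2/(1-ε))) * r ^ ((1-ε)/2) := by
      have hY : 0 ≤ r1 ^ ((1-ε)/2) := (Real.rpow_pos_of_pos hr1p _).le
      calc c * ((r ^ ((1-ε)/2) - r1 ^ ((1-ε)/2))/((1-ε)/2))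
          ≤ c * ((r ^ ((1-ε)/2))/((1-ε)/2)) := by
            apply mul_le_mul_of_nonneg_left ?_ hcp.le
            exact (div_le_div_iff_of_pos_right (by linarith)).mpr (by linarith)
        _ = (c * (2/(1-ε))) * r ^ ((1-ε)/2) := by
            rw [div_div_eq_mul_div]; ring
    linarith
  have hGb : |∫ s in r1..r, (1/Real.sqrt (2*(L - q s)) - 1/Real.sqrt (2*(L - lam0)))|
      ≤ Mg * r ^ ((1-ε)/2) := by
    rw [hMgd]
    exact hintGb Kg hKgp _ higG (fun s hs => hgp L hlL s hs.1)
  have hQb : |∫ s in r1..r, (q s - lam0)| ≤ Mq * r ^ ((1-ε)/2) := by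
    rw [hMqd]
    exact hintGb C hC _ hiqm (fun s hs => hqd s hs.1)
  -- tail bound
  have hFib : |∫ s in Set.Ioi r, (Real.sqrt (2*(L - q s))
      - (Real.sqrt (2*(L - lam0)) - (q s - lam0)/Real.sqrt (2*(L - lam0))))|
      ≤ Kf * (r ^ (-ε)/ε) := by
    have hdom : IntegrableOn (fun s : ℝ => Kf * s ^ (-(1+ε))) (Set.Ioi r) :=
      (integrableOn_Ioi_rpow_of_lt (by linarith) hrp).const_mul Kf
    have h1 : ‖∫ s in Set.Ioi r, (Real.sqrt (2*(L - q s))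
        - (Real.sqrt (2*(L - lam0)) - (q s - lam0)/Real.sqrt (2*(L - lam0))))‖
        ≤ ∫ s in Set.Ioi r, Kf * s ^ (-(1+ε)) := by
      apply MeasureTheory.norm_integral_le_of_norm_le hdom
      filter_upwards [ae_restrict_mem measurableSet_Ioi] with s hs
      rw [Real.norm_eq_abs]
      exact hfp L hlL s (hrr1.le.trans hs.le)
    have h2 : (∫ s in Set.Ioi r, Kf * s ^ (-(1+ε))) = Kf * (r ^ (-ε)/ε) := by
      rw [MeasureTheory.integral_const_mul, integral_Ioi_rpow_of_lt (by linarith) hrp]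
      have he : -(1+ε) + 1 = -ε := by ring
      rw [he, neg_div_neg_eq]
    rw [Real.norm_eq_abs] at h1
    linarith
  -- rpow arithmetic at (t, r)
  have hrR : r ≤ R * t := by
    have h5 : r1 * 1 ≤ r1 * t := mul_le_mul_of_nonneg_left ht1 hr1p.le
    have h5' : r1 ≤ r1 * t := by simpa using h5
    have h6 : (r1 + μ2) * t = r1*t + μ2*t := by ring
    rw [hRd]; linarith
  have hrle : r ^ (1-ε) ≤ R^(1-ε) * t^(1-ε) := by
    rw [← Real.mul_rpow hRp.le ht0.le]
    exact Real.rpow_le_rpow hrp.le hrR (by linarith)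
  have hsqr : (r ^ ((1-ε)/2))^2 = r ^ (1-ε) := by
    rw [sq_rpow' r _ hrp.le]
    congr 1; ring
  have ht1e : t ^ (1-ε) = t^(-ε) * t := by
    rw [show (1:ℝ)-ε = -ε + 1 by ring, Real.rpow_add ht0, Real.rpow_one]
  have htme : 0 < t ^ (-ε) := Real.rpow_pos_of_pos ht0 _
  have hμtr : μ1 * t ≤ r := by linarith
  have hrme : r ^ (-ε) ≤ μ1^(-ε) * t^(-ε) := by
    have h5 : r ^ (-ε) ≤ (μ1 * t) ^ (-ε) :=
      Real.rpow_le_rpow_of_nonpos (mul_pos hμ1 ht0) hμtr (by linarith)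
    rwa [Real.mul_rpow hμ1.le ht0.le] at h5
  -- term bounds
  set Gv := ∫ s in r1..r, (1/Real.sqrt (2*(L - q s)) - 1/Real.sqrt (2*(L - lam0)))
    with hGvd
  set Qv := ∫ s in r1..r, (q s - lam0) with hQvd
  set Fv := ∫ s in Set.Ioi r, (Real.sqrt (2*(L - q s))
      - (Real.sqrt (2*(L - lam0)) - (q s - lam0)/Real.sqrt (2*(L - lam0)))) with hFvd
  have hG2 : Gv^2 ≤ Mg^2 * r ^ (1-ε) := by
    have h5 : |Gv|^2 ≤ (Mg * r ^ ((1-ε)/2))^2 :=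
      pow_le_pow_left₀ (abs_nonneg _) hGb 2
    rw [sq_abs] at h5
    calc Gv^2 ≤ (Mg * r ^ ((1-ε)/2))^2 := h5
      _ = Mg^2 * (r ^ ((1-ε)/2))^2 := by ring
      _ = Mg^2 * r ^ (1-ε) := by rw [hsqr]
  have hterm1 : Gv^2 * (Real.sqrt (2*(L - lam0)))^2 / (2*t) ≤ c1' * t^(-ε) := by
    have hb0sq : (Real.sqrt (2*(L - lam0)))^2 ≤ bmax^2 :=
      pow_le_pow_left₀ (Real.sqrt_nonneg _) hb0max 2
    have hnum : Gv^2 * (Real.sqrt (2*(L - lam0)))^2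
        ≤ Mg^2 * (R^(1-ε) * t^(1-ε)) * bmax^2 := by
      have h6 : Gv^2 ≤ Mg^2 * (R^(1-ε) * t^(1-ε)) :=
        le_trans hG2 (mul_le_mul_of_nonneg_left hrle (sq_nonneg Mg))
      exact mul_le_mul h6 hb0sq (sq_nonneg _) (mul_nonneg (sq_nonneg Mg) (mul_nonneg hRe.le (Real.rpow_pos_of_pos ht0 _).le))
    have h7 : Gv^2 * (Real.sqrt (2*(L - lam0)))^2 / (2*t)
        ≤ Mg^2 * (R^(1-ε) * t^(1-ε)) * bmax^2 / (2*t) :=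
      (div_le_div_iff_of_pos_right (by linarith)).mpr hnum
    have h8 : Mg^2 * (R^(1-ε) * t^(1-ε)) * bmax^2 / (2*t) = c1' * t^(-ε) := by
      rw [ht1e]
      calc Mg^2*(R^(1-ε)*(t^(-ε)*t))*bmax^2/(2*t)
          = (Mg^2*R^(1-ε)*bmax^2) * (t^(-ε)*t)/(2*t) := by ring
        _ = (Mg^2*R^(1-ε)*bmax^2)/2 * t^(-ε) := cancel_aux _ _ _ _ ht0.ne' two_ne_zero
        _ = c1' * t^(-ε) := by rw [hc1d]; ring
    linarith
  have hterm2 : |Qv| * |Gv| / (r - r1) ≤ c2' * t^(-ε) := by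
    have hnum : |Qv| * |Gv| ≤ Mq * Mg * (R^(1-ε) * t^(1-ε)) := by
      have h5 : |Qv| * |Gv| ≤ (Mq * r ^ ((1-ε)/2)) * (Mg * r ^ ((1-ε)/2)) :=
        mul_le_mul hQb hGb (abs_nonneg _) (mul_nonneg hMqp.le hrpnn)
      have h6 : (Mq * r ^ ((1-ε)/2)) * (Mg * r ^ ((1-ε)/2))
          = Mq * Mg * (r ^ ((1-ε)/2))^2 := by ring
      rw [h6, hsqr] at h5
      exact le_trans h5 (mul_le_mul_of_nonneg_left hrle (mul_pos hMqp hMgp).le)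
    have h7 : |Qv| * |Gv| / (r - r1) ≤ Mq * Mg * (R^(1-ε) * t^(1-ε)) / (μ1 * t) :=
      div_le_div₀ (mul_nonneg (mul_pos hMqp hMgp).le
        (mul_nonneg hRe.le (Real.rpow_pos_of_pos ht0 _).le)) hnum
        (mul_pos hμ1 ht0) hρl
    have h8 : Mq * Mg * (R^(1-ε) * t^(1-ε)) / (μ1 * t) = c2' * t^(-ε) := by
      rw [ht1e]
      calc Mq*Mg*(R^(1-ε)*(t^(-ε)*t))/(μ1*t)
          = (Mq*Mg*R^(1-ε)) * (t^(-ε)*t)/(μ1*t) := by ring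
        _ = (Mq*Mg*R^(1-ε))/μ1 * t^(-ε) := cancel_aux _ _ _ _ ht0.ne' hμ1.ne'
        _ = c2' * t^(-ε) := by rw [hc2d]
    linarith
  have hterm3 : |Fv| ≤ c3' * t^(-ε) := by
    have h5 : Kf * (r ^ (-ε)/ε) ≤ Kf * ((μ1^(-ε) * t^(-ε))/ε) := by
      apply mul_le_mul_of_nonneg_left ?_ hKfp.le
      exact (div_le_div_iff_of_pos_right hε).mpr hrme
    have h6 : Kf * ((μ1^(-ε) * t^(-ε))/ε) = c3' * t^(-ε) := by
      rw [hc3d]; ring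
    calc |Fv| ≤ Kf * (r ^ (-ε)/ε) := hFib
      _ ≤ Kf * ((μ1^(-ε) * t^(-ε))/ε) := h5
      _ = c3' * t^(-ε) := h6
  -- assemble
  have htri : ∀ x y z : ℝ, |x + y - z| ≤ |x| + |y| + |z| := by
    intro x y z
    have h5 := abs_add_le (x + y) (-z)
    rw [← sub_eq_add_neg, abs_neg] at h5
    linarith [abs_add_le x y]
  have habs1 : |(-(Gv^2 * (Real.sqrt (2*(L - lam0)))^2)/(2*t))|
      = Gv^2 * (Real.sqrt (2*(L - lam0)))^2 / (2*t) := by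
    rw [abs_div, abs_neg, abs_of_nonneg (mul_nonneg (sq_nonneg Gv) (sq_nonneg _)),
      abs_of_nonneg (by linarith : (0:ℝ) ≤ 2*t)]
  have habs2 : |Qv * Gv / (r - r1)| = |Qv| * |Gv| / (r - r1) := by
    rw [abs_div, abs_mul, abs_of_nonneg hρp.le]
  calc |K1 t r - Kdo t r - θ L|
      = |(-(Gv^2 * (Real.sqrt (2*(L - lam0)))^2)/(2*t)) + Qv * Gv / (r - r1) - Fv| := by
        rw [hE]
    _ ≤ |(-(Gv^2 * (Real.sqrt (2*(L - lam0)))^2)/(2*t))| + |Qv * Gv / (r - r1)| + |Fv| :=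
        htri _ _ _
    _ = Gv^2 * (Real.sqrt (2*(L - lam0)))^2 / (2*t) + |Qv| * |Gv| / (r - r1) + |Fv| := by
        rw [habs1, habs2]
    _ ≤ c1' * t^(-ε) + c2' * t^(-ε) + c3' * t^(-ε) := by
        linarith
    _ = (c1' + c2' + c3') * t^(-ε) := by ring
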